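/- Let m, k, N be positive integers and let E = {v_1,…,v_N} ⊂ R^m be a set of nonzero vectors no two of which are collinear. Suppose 1/p_j ∈ [0,1], λ_j ∈ R, and there is a finite constant C such that Λ(f_1,…,f_N) ≤ C Π_{j=1}^N ‖f_j‖_{L^{p_j}_{λ_j}(R^k)} for all nonnegative measurable f_1,…,f_N on R^k. Then Σ_{j=1}^N 1/p_j ≥ 1. -/

import Mathlib

open MeasureTheory ENNReal
open scoped Classical
open scoped Pointwise

/-- The dot product `v · x ∈ ℝᵏ` for `v ∈ ℝᵐ` and `x ∈ (ℝᵏ)ᵐ`. -/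
noncomputable def dotv {m k : ℕ} (v : Fin m → ℝ)
    (x : Fin m → EuclideanSpace ℝ (Fin k)) : EuclideanSpace ℝ (Fin k) :=
  ∑ i, v i • x i

/-- The Brascamp–Lieb form `Λ(f₁,…,f_N) = ∫ ∏ f_j(v_j · x) dx`. -/
noncomputable def BLform {m k N : ℕ} (v : Fin N → Fin m → ℝ)
    (f : Fin N → EuclideanSpace ℝ (Fin k) → ℝ≥0∞) : ℝ≥0∞ :=
  ∫⁻ x : Fin m → EuclideanSpace ℝ (Fin k), ∏ j, f j (dotv (v j) x)

/-- The weighted norm `‖f‖_{L^p_α} = ‖ |·|^α f ‖_{L^p}`. -/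
noncomputable def wnorm {k : ℕ} (p α : ℝ)
    (f : EuclideanSpace ℝ (Fin k) → ℝ≥0∞) : ℝ≥0∞ :=
  (∫⁻ y : EuclideanSpace ℝ (Fin k), ((‖y‖₊ : ℝ≥0∞) ^ α * f y) ^ p) ^ (1 / p)

/-- A family of vectors in `ℝᵐ` is generic if every subfamily of cardinality `m`
is a basis of `ℝᵐ`. -/
def IsGeneric {m N : ℕ} (v : Fin N → Fin m → ℝ) : Prop :=
  ∀ s : Finset (Fin N), s.card = m →
    LinearIndependent ℝ (fun i : s => v i.1) ∧
      Submodule.span ℝ (v '' ↑s) = ⊤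


section aux
variable {m k : ℕ}

instance : (volume : Measure (Fin m → EuclideanSpace ℝ (Fin k))).IsAddHaarMeasure :=
  MeasureTheory.Measure.pi.isAddHaarMeasure _

lemma finrank_X : Module.finrank ℝ (Fin m → EuclideanSpace ℝ (Fin k)) = m * k := by
  simp [Module.finrank_pi_fintype]

lemma dotv_smul (v : Fin m → ℝ) (c : ℝ) (x : Fin m → EuclideanSpace ℝ (Fin k)) :
    dotv v (c • x) = c • dotv v x := by
  simp only [dotv, Pi.smul_apply, Finset.smul_sum, smul_comm c]

lemma continuous_dotv (v : Fin m → ℝ) :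
    Continuous (fun x : Fin m → EuclideanSpace ℝ (Fin k) => dotv v x) := by
  unfold dotv
  exact continuous_finset_sum _ fun i _ => (continuous_apply i).const_smul (v i)

lemma norm_dotv_le (v : Fin m → ℝ) (x : Fin m → EuclideanSpace ℝ (Fin k)) :
    ‖dotv v x‖ ≤ (∑ i, |v i|) * ‖x‖ := by
  refine (norm_sum_le _ _).trans ?_
  rw [Finset.sum_mul]
  refine Finset.sum_le_sum fun i _ => ?_
  rw [norm_smul, Real.norm_eq_abs]
  exact mul_le_mul_of_nonneg_left (norm_le_pi_norm x i) (abs_nonneg _)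

/-- The kernel of `dotv v` as a linear map. -/
noncomputable def dotvL {m k : ℕ} (v : Fin m → ℝ) :
    (Fin m → EuclideanSpace ℝ (Fin k)) →ₗ[ℝ] EuclideanSpace ℝ (Fin k) where
  toFun := dotv v
  map_add' x y := by simp [dotv, smul_add, Finset.sum_add_distrib]
  map_smul' c x := by simpa using dotv_smul v c x

lemma null_ker (hk : 0 < k) (v : Fin m → ℝ) (hv : v ≠ 0) :
    volume {x : Fin m → EuclideanSpace ℝ (Fin k) | dotv v x = 0} = 0 := by
  have hset : {x : Fin m → EuclideanSpace ℝ (Fin k) | dotv v x = 0}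
      = (LinearMap.ker (dotvL (k := k) v) : Set (Fin m → EuclideanSpace ℝ (Fin k))) := by
    ext x; simp [LinearMap.mem_ker, dotvL]; exact Iff.rfl
  rw [hset]
  refine Measure.addHaar_submodule _ _ ?_
  intro htop
  obtain ⟨i, hi⟩ : ∃ i, v i ≠ 0 := by
    by_contra h
    push_neg at h
    exact hv (funext h)
  -- construct x with dotv v x ≠ 0
  set w : EuclideanSpace ℝ (Fin k) := EuclideanSpace.single ⟨0, hk⟩ 1 with hw
  have hwne : w ≠ 0 := by
    intro h
    have h0 := congrArg (fun z : EuclideanSpace ℝ (Fin k) => z ⟨0, hk⟩) h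
    rw [hw] at h0
    rw [EuclideanSpace.single_apply] at h0
    simp at h0
  set x : Fin m → EuclideanSpace ℝ (Fin k) := fun i' => if i' = i then (v i)⁻¹ • w else 0 with hx
  have hmem : x ∈ LinearMap.ker (dotvL v) := htop ▸ Submodule.mem_top
  have hdx : dotv v x = w := by
    simp only [dotv, hx]
    rw [Finset.sum_eq_single i]
    · simp [smul_smul, mul_inv_cancel₀ hi]
    · intro b _ hb; simp [hb]
    · simp
  rw [LinearMap.mem_ker] at hmem
  have hdx2 : dotv v x = 0 := hmem
  exact hwne (by rw [← hdx, hdx2])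

end aux


lemma prod_rpow_const {ι : Type*} (s : Finset ι) (x : ℝ≥0∞) (hx : x ≠ 0) (hx' : x ≠ ⊤)
    (b : ι → ℝ) : ∏ j ∈ s, x ^ b j = x ^ (∑ j ∈ s, b j) := by
  induction s using Finset.induction_on with
  | empty => simp
  | insert _ _ hnotmem ih =>
      rw [Finset.prod_insert hnotmem, Finset.sum_insert hnotmem, ENNReal.rpow_add _ _ hx hx', ih]

lemma rpow_min_le {a b y : ℝ≥0∞} (c : ℝ) (ha : a ≤ y) (hb : y ≤ b) :
    min (a ^ c) (b ^ c) ≤ y ^ c := by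
  rcases le_or_gt 0 c with hc | hc
  · exact le_trans (min_le_left _ _) (ENNReal.rpow_le_rpow ha hc)
  · refine le_trans (min_le_right _ _) ?_
    rw [show c = -(-c) by ring, ENNReal.rpow_neg b, ENNReal.rpow_neg y]
    exact ENNReal.inv_le_inv.mpr (ENNReal.rpow_le_rpow hb (by linarith))

lemma rpow_ne_zero' {x : ℝ≥0∞} (hx : x ≠ 0) (hx' : x ≠ ⊤) (c : ℝ) : x ^ c ≠ 0 := by
  simp [ENNReal.rpow_eq_zero_iff, hx, hx']

lemma rpow_ne_top' {x : ℝ≥0∞} (hx : x ≠ 0) (hx' : x ≠ ⊤) (c : ℝ) : x ^ c ≠ ⊤ := by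
  simp [ENNReal.rpow_eq_top_iff, hx, hx']

lemma endgame {c F : ℝ≥0∞} {s : ℝ} (hc : c ≠ 0) (hF : F ≠ ⊤) (hs0 : 0 ≤ s) (hs : s < 1)
    (h : ∀ T : ℕ, c * ((T : ℝ≥0∞) + 1) ≤ F * ((T : ℝ≥0∞) + 1) ^ s) : False := by
  set u : ℝ := 1 - s with hu
  have hu0 : 0 < u := by simp [hu]; linarith
  have key : ∀ T : ℕ, c * ((T : ℝ≥0∞) + 1) ^ u ≤ F := by
    intro T
    set A : ℝ≥0∞ := (T : ℝ≥0∞) + 1 with hA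
    have hA0 : A ≠ 0 := by simp [hA]
    have hAt : A ≠ ⊤ := by simp [hA]
    have h1 : A = A ^ s * A ^ u := by
      rw [← ENNReal.rpow_add _ _ hA0 hAt]
      norm_num [hu]
    have h2 : (c * A ^ u) * A ^ s ≤ F * A ^ s := by
      calc (c * A ^ u) * A ^ s = c * (A ^ s * A ^ u) := by ring
      _ = c * A := by rw [← h1]
      _ ≤ F * A ^ s := h T
    exact (ENNReal.mul_le_mul_iff_left (rpow_ne_zero' hA0 hAt s) (rpow_ne_top' hA0 hAt s)).mp h2
  -- now find T contradicting key
  obtain ⟨n, hn⟩ := ENNReal.exists_nat_gt (ENNReal.div_lt_top hF hc).ne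
  set x : ℝ := max 1 ((n + 1 : ℝ) ^ (1 / u)) with hx
  set T : ℕ := ⌈x⌉₊ with hT
  have hxT : x ≤ (T : ℝ) + 1 := le_trans (Nat.le_ceil x) (by rw [← hT]; linarith)
  have hreal : ((n : ℝ) + 1) ≤ ((T : ℝ) + 1) ^ u := by
    have h0 : (0:ℝ) ≤ (n + 1 : ℝ) ^ (1 / u) := Real.rpow_nonneg (by positivity) _
    calc ((n : ℝ) + 1) = ((n : ℝ) + 1) ^ ((1/u) * u) := by
          rw [one_div, inv_mul_cancel₀ hu0.ne', Real.rpow_one]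
    _ = (((n : ℝ) + 1) ^ (1/u)) ^ u := by rw [Real.rpow_mul (by positivity)]
    _ ≤ x ^ u := Real.rpow_le_rpow h0 (le_max_right _ _) hu0.le
    _ ≤ ((T : ℝ) + 1) ^ u := Real.rpow_le_rpow (le_trans zero_le_one (le_max_left _ _)) hxT hu0.le
  have henn : ((n : ℝ≥0∞) + 1) ≤ ((T : ℝ≥0∞) + 1) ^ u := by
    have e1 : ((T : ℝ≥0∞) + 1) = ENNReal.ofReal ((T : ℝ) + 1) := by
      rw [ENNReal.ofReal_add (by positivity) zero_le_one]
      simp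
    have e2 : ((n : ℝ≥0∞) + 1) = ENNReal.ofReal ((n : ℝ) + 1) := by
      rw [ENNReal.ofReal_add (by positivity) zero_le_one]
      simp
    rw [e1, e2, ENNReal.ofReal_rpow_of_pos (by positivity)]
    exact ENNReal.ofReal_le_ofReal hreal
  have hlt : F < c * ((T : ℝ≥0∞) + 1) ^ u := by
    have : F / c < ((T : ℝ≥0∞) + 1) ^ u :=
      lt_of_lt_of_le hn (le_trans (by simp) henn)
    rwa [ENNReal.div_lt_iff (Or.inl hc) (Or.inr hF), mul_comm] at this
  exact absurd (key T) (not_le.mpr hlt)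

lemma exists_dyadic (M : ℕ) {r : ℝ} (h1 : (2:ℝ) ^ (-(M:ℝ)) ≤ r) (h2 : r ≤ (2:ℝ) ^ (M:ℝ)) :
    ∃ i : ℕ, i ≤ 2 * M ∧ (2:ℝ) ^ ((i:ℝ) - M) ≤ r ∧ r ≤ (2:ℝ) ^ ((i:ℝ) - M + 1) := by
  have hr0 : 0 < r := lt_of_lt_of_le (Real.rpow_pos_of_pos (by norm_num) _) h1
  set l : ℝ := Real.logb 2 r with hl
  have hrl : (2:ℝ) ^ l = r := Real.rpow_logb (by norm_num) (by norm_num) hr0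
  have hlM : l ≤ (M : ℝ) := by
    rw [← Real.logb_rpow (b := 2) (x := (M:ℝ)) (by norm_num) (by norm_num)]
    exact Real.logb_le_logb_of_le (by norm_num) hr0 h2
  have hlM' : -(M : ℝ) ≤ l := by
    rw [← Real.logb_rpow (b := 2) (x := -(M:ℝ)) (by norm_num) (by norm_num)]
    exact Real.logb_le_logb_of_le (by norm_num) (Real.rpow_pos_of_pos (by norm_num) _) h1
  set z : ℤ := ⌊l⌋ with hz
  have hz1 : (z : ℝ) ≤ l := Int.floor_le l
  have hz2 : l ≤ (z : ℝ) + 1 := (Int.lt_floor_add_one l).le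
  have hzM : z ≤ (M : ℤ) := by
    have := Int.floor_le_floor hlM
    simpa using this
  have hzM' : -(M : ℤ) ≤ z := by
    rw [hz, Int.le_floor]
    push_cast
    exact hlM'
  refine ⟨(z + M).toNat, ?_, ?_, ?_⟩
  · omega
  · have hcast : (((z + M).toNat : ℝ)) - M = (z : ℝ) := by
      have : ((z + M).toNat : ℤ) = z + M := Int.toNat_of_nonneg (by omega)
      have := congrArg (fun t : ℤ => (t : ℝ)) this
      push_cast at this
      linarith
    rw [hcast, ← hrl]
    exact Real.rpow_le_rpow_of_exponent_le (by norm_num) hz1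
  · have hcast : (((z + M).toNat : ℝ)) - M + 1 = (z : ℝ) + 1 := by
      have : ((z + M).toNat : ℤ) = z + M := Int.toNat_of_nonneg (by omega)
      have := congrArg (fun t : ℤ => (t : ℝ)) this
      push_cast at this
      linarith
    rw [hcast, ← hrl]
    exact Real.rpow_le_rpow_of_exponent_le (by norm_num) hz2


lemma rpow_le_rpow_neg {a y : ℝ≥0∞} (h : a ≤ y) {c : ℝ} (hc : 0 ≤ c) :
    y ^ (-c) ≤ a ^ (-c) := by
  rw [ENNReal.rpow_neg, ENNReal.rpow_neg]
  exact ENNReal.inv_le_inv.mpr (ENNReal.rpow_le_rpow h hc)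

section k
variable {k : ℕ}

/-- annulus -/
def ann (k M : ℕ) : Set (EuclideanSpace ℝ (Fin k)) :=
  {y | (2:ℝ) ^ (-(M:ℝ)) ≤ ‖y‖ ∧ ‖y‖ ≤ (2:ℝ) ^ (M:ℝ)}

lemma measurableSet_ann (M : ℕ) : MeasurableSet (ann k M) := by
  have : ann k M = (fun y : EuclideanSpace ℝ (Fin k) => ‖y‖) ⁻¹'
      (Set.Icc ((2:ℝ) ^ (-(M:ℝ))) ((2:ℝ) ^ (M:ℝ))) := rfl
  rw [this]
  exact (continuous_norm.measurable) measurableSet_Icc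

noncomputable def testf (k : ℕ) (β : ℝ) (M : ℕ) : EuclideanSpace ℝ (Fin k) → ℝ≥0∞ :=
  fun y => if y ∈ ann k M then (‖y‖₊ : ℝ≥0∞) ^ (-β) else 0

lemma measurable_testf (β : ℝ) (M : ℕ) : Measurable (testf k β M) := by
  refine Measurable.ite (measurableSet_ann M) ?_ measurable_const
  exact (ENNReal.continuous_rpow_const.comp
    (ENNReal.continuous_coe.comp continuous_nnnorm)).measurable

lemma wnorm_zero (α : ℝ) (f : EuclideanSpace ℝ (Fin k) → ℝ≥0∞) : wnorm 0 α f = 1 := by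
  simp [wnorm]

noncomputable def Dk (k : ℕ) : ℝ≥0∞ :=
  (2:ℝ≥0∞) ^ (k:ℝ) * volume (Metric.ball (0 : EuclideanSpace ℝ (Fin k)) 1)

lemma Dk_pos (hk : 0 < k) : 0 < Dk k := by
  apply ENNReal.mul_pos
  · exact (rpow_ne_zero' (by norm_num) (by norm_num) _)
  · exact (Metric.measure_ball_pos _ _ (by norm_num)).ne'

lemma Dk_ne_top : Dk k ≠ ⊤ :=
  ENNReal.mul_ne_top (rpow_ne_top' (by norm_num) (by norm_num) _)
    measure_ball_lt_top.ne

end k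

section wnormbound
variable {k : ℕ}

/-- dyadic shell -/
def shl (k : ℕ) (e : ℝ) : Set (EuclideanSpace ℝ (Fin k)) :=
  {y | (2:ℝ) ^ e ≤ ‖y‖ ∧ ‖y‖ ≤ (2:ℝ) ^ (e + 1)}

lemma measurableSet_shl (e : ℝ) : MeasurableSet (shl k e) := by
  have : shl k e = (fun y : EuclideanSpace ℝ (Fin k) => ‖y‖) ⁻¹'
      (Set.Icc ((2:ℝ) ^ e) ((2:ℝ) ^ (e + 1))) := rfl
  rw [this]
  exact (continuous_norm.measurable) measurableSet_Icc

lemma lintegral_shl_le (e : ℝ) :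
    ∫⁻ y in shl k e, (‖y‖₊ : ℝ≥0∞) ^ (-(k:ℝ)) ≤ Dk k := by
  have hstep : ∫⁻ y in shl k e, (‖y‖₊ : ℝ≥0∞) ^ (-(k:ℝ))
      ≤ ∫⁻ _y in shl k e, ((2:ℝ≥0∞) ^ e) ^ (-(k:ℝ)) := by
    refine setLIntegral_mono' (measurableSet_shl e) fun y hy => ?_
    have h1 : ((2:ℝ≥0∞) ^ e) ≤ (‖y‖₊ : ℝ≥0∞) := by
      rw [← enorm_eq_nnnorm, ← ofReal_norm]
      have : ((2:ℝ≥0∞) ^ e) = ENNReal.ofReal ((2:ℝ) ^ e) := by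
        rw [show (2:ℝ≥0∞) = ENNReal.ofReal (2:ℝ) by norm_num]
        exact ENNReal.ofReal_rpow_of_pos (by norm_num)
      rw [this]
      exact ENNReal.ofReal_le_ofReal hy.1
    exact rpow_le_rpow_neg h1 (by positivity)
  refine hstep.trans ?_
  rw [setLIntegral_const]
  have hmeas : volume (shl k e) ≤ ENNReal.ofReal (((2:ℝ) ^ (e+1)) ^ k)
      * volume (Metric.ball (0 : EuclideanSpace ℝ (Fin k)) 1) := by
    have hsub : shl k e ⊆ Metric.closedBall (0 : EuclideanSpace ℝ (Fin k)) ((2:ℝ) ^ (e+1)) := by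
      intro y hy
      simpa [Metric.mem_closedBall, dist_eq_norm] using hy.2
    refine (measure_mono hsub).trans ?_
    rw [Measure.addHaar_closedBall _ _ (by positivity)]
    simp [finrank_euclideanSpace_fin]
  calc ((2:ℝ≥0∞) ^ e) ^ (-(k:ℝ)) * volume (shl k e)
      ≤ ((2:ℝ≥0∞) ^ e) ^ (-(k:ℝ)) * (ENNReal.ofReal (((2:ℝ) ^ (e+1)) ^ k)
        * volume (Metric.ball (0 : EuclideanSpace ℝ (Fin k)) 1)) :=
        mul_le_mul_right hmeas _
    _ = Dk k := by
        rw [Dk, ← mul_assoc]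
        congr 1
        have h2 : ENNReal.ofReal (((2:ℝ) ^ (e+1)) ^ k) = (2:ℝ≥0∞) ^ ((e+1) * (k:ℝ)) := by
          rw [show (2:ℝ≥0∞) = ENNReal.ofReal (2:ℝ) by norm_num,
            ENNReal.ofReal_rpow_of_pos (by norm_num)]
          congr 1
          rw [← Real.rpow_natCast ((2:ℝ) ^ (e+1)) k, ← Real.rpow_mul (by positivity)]
        rw [h2, ← ENNReal.rpow_mul, ← ENNReal.rpow_add _ _ (by norm_num) (by norm_num)]
        congr 1
        ring

lemma ann_subset_shl (M : ℕ) {y : EuclideanSpace ℝ (Fin k)} (hy : y ∈ ann k M) :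
    ∃ i : ℕ, i ∈ Finset.range (2*M+1) ∧ y ∈ shl k ((i:ℝ) - M) := by
  obtain ⟨i, hi, h1, h2⟩ := exists_dyadic M hy.1 hy.2
  exact ⟨i, Finset.mem_range.mpr (by omega), ⟨h1, h2⟩⟩

lemma wnorm_testf_le {p lam : ℝ} (hp : 0 < p) (M : ℕ) :
    wnorm p lam (testf k (lam + k * (1/p)) M) ≤ (Dk k * (2*(M:ℝ≥0∞)+1)) ^ (1/p) := by
  set β : ℝ := lam + k * (1/p) with hβ
  have hpt : ∀ y : EuclideanSpace ℝ (Fin k),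
      ((‖y‖₊ : ℝ≥0∞) ^ lam * testf k β M y) ^ p
        = Set.indicator (ann k M) (fun y => (‖y‖₊ : ℝ≥0∞) ^ (-(k:ℝ))) y := by
    intro y
    by_cases hy : y ∈ ann k M
    · rw [Set.indicator_of_mem hy]
      have hy0 : (0:ℝ) < ‖y‖ := lt_of_lt_of_le (Real.rpow_pos_of_pos (by norm_num) _) hy.1
      have h0 : (‖y‖₊ : ℝ≥0∞) ≠ 0 := by
        simp only [ne_eq, ENNReal.coe_eq_zero, nnnorm_eq_zero]
        intro h; rw [h] at hy0; simp at hy0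
      have ht : (‖y‖₊ : ℝ≥0∞) ≠ ⊤ := ENNReal.coe_ne_top
      rw [testf, if_pos hy, ← ENNReal.rpow_add _ _ h0 ht, ← ENNReal.rpow_mul]
      congr 1
      rw [hβ]
      field_simp
      ring
    · rw [Set.indicator_of_notMem hy, testf, if_neg hy, mul_zero,
        ENNReal.zero_rpow_of_pos hp]
  rw [wnorm, lintegral_congr hpt, lintegral_indicator (measurableSet_ann M)]
  have hcov : ∫⁻ y in ann k M, (‖y‖₊ : ℝ≥0∞) ^ (-(k:ℝ))
      ≤ ∑ i ∈ Finset.range (2*M+1), ∫⁻ y in shl k ((i:ℝ) - M), (‖y‖₊ : ℝ≥0∞) ^ (-(k:ℝ)) := by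
    rw [← lintegral_indicator (measurableSet_ann M)]
    have hmg : Measurable fun y : EuclideanSpace ℝ (Fin k) => (‖y‖₊ : ℝ≥0∞) ^ (-(k:ℝ)) :=
      (ENNReal.continuous_rpow_const.comp
        (ENNReal.continuous_coe.comp continuous_nnnorm)).measurable
    have : ∀ i ∈ Finset.range (2*M+1), Measurable fun y : EuclideanSpace ℝ (Fin k) =>
        Set.indicator (shl k ((i:ℝ) - M)) (fun y => (‖y‖₊ : ℝ≥0∞) ^ (-(k:ℝ))) y :=
      fun i _ => hmg.indicator (measurableSet_shl _)
    calc ∫⁻ y, Set.indicator (ann k M) (fun y => (‖y‖₊ : ℝ≥0∞) ^ (-(k:ℝ))) y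
        ≤ ∫⁻ y, ∑ i ∈ Finset.range (2*M+1),
            Set.indicator (shl k ((i:ℝ) - M)) (fun y => (‖y‖₊ : ℝ≥0∞) ^ (-(k:ℝ))) y := by
          refine lintegral_mono fun y => ?_
          by_cases hy : y ∈ ann k M
          · rw [Set.indicator_of_mem hy]
            obtain ⟨i, hi, hyi⟩ := ann_subset_shl M hy
            calc (fun y => (‖y‖₊ : ℝ≥0∞) ^ (-(k:ℝ))) y
                = Set.indicator (shl k ((i:ℝ) - M)) (fun y => (‖y‖₊ : ℝ≥0∞) ^ (-(k:ℝ))) y := by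
                  rw [Set.indicator_of_mem hyi]
              _ ≤ _ := Finset.single_le_sum
                  (f := fun i : ℕ => Set.indicator (shl k ((i:ℝ) - M))
                    (fun y => (‖y‖₊ : ℝ≥0∞) ^ (-(k:ℝ))) y)
                  (fun _ _ => zero_le) hi
          · rw [Set.indicator_of_notMem hy]; exact zero_le
      _ = _ := by
          rw [lintegral_finset_sum _ this]
          exact Finset.sum_congr rfl fun i _ => lintegral_indicator (measurableSet_shl _) _
  have hsum : ∑ i ∈ Finset.range (2*M+1), ∫⁻ y in shl k ((i:ℝ) - M), (‖y‖₊ : ℝ≥0∞) ^ (-(k:ℝ))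
      ≤ Dk k * (2*(M:ℝ≥0∞)+1) := by
    calc _ ≤ ∑ _i ∈ Finset.range (2*M+1), Dk k :=
          Finset.sum_le_sum fun i _ => lintegral_shl_le _
      _ = Dk k * (2*(M:ℝ≥0∞)+1) := by
          rw [Finset.sum_const, Finset.card_range, nsmul_eq_mul]
          push_cast
          ring
  exact ENNReal.rpow_le_rpow (hcov.trans hsum) (by positivity)

end wnormbound


section good
variable {m k N : ℕ}

def Gset (v : Fin N → Fin m → ℝ) (ε : ℝ) : Set (Fin m → EuclideanSpace ℝ (Fin k)) :=
  {x | (1 ≤ ‖x‖ ∧ ‖x‖ < 2) ∧ ∀ j, ε ≤ ‖dotv (v j) x‖}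

lemma measurableSet_Gset (v : Fin N → Fin m → ℝ) (ε : ℝ) :
    MeasurableSet (Gset (k := k) v ε) := by
  have h1 : MeasurableSet {x : Fin m → EuclideanSpace ℝ (Fin k) | 1 ≤ ‖x‖ ∧ ‖x‖ < 2} :=
    continuous_norm.measurable measurableSet_Ico
  have h2 : ∀ j, MeasurableSet {x : Fin m → EuclideanSpace ℝ (Fin k) | ε ≤ ‖dotv (v j) x‖} :=
    fun j => ((continuous_dotv (v j)).norm.measurable) measurableSet_Ici
  have : Gset (k := k) v ε = {x : Fin m → EuclideanSpace ℝ (Fin k) | 1 ≤ ‖x‖ ∧ ‖x‖ < 2}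
      ∩ ⋂ j, {x | ε ≤ ‖dotv (v j) x‖} := by
    ext x; simp [Gset, Set.mem_iInter]
  rw [this]
  exact h1.inter (MeasurableSet.iInter h2)

lemma exists_good (hm : 0 < m) (hk : 0 < k) (hN : 0 < N)
    (v : Fin N → Fin m → ℝ) (hv0 : ∀ j, v j ≠ 0)
    (hnull : ∀ j, volume {x : Fin m → EuclideanSpace ℝ (Fin k) | dotv (v j) x = 0} = 0) :
    ∃ ε : ℝ, 0 < ε ∧ 0 < volume (Gset (k := k) v ε) := by
  haveI : Nontrivial (EuclideanSpace ℝ (Fin k)) := by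
    refine ⟨0, EuclideanSpace.single ⟨0, hk⟩ 1, fun h => ?_⟩
    have h0 := congrArg (fun z : EuclideanSpace ℝ (Fin k) => z ⟨0, hk⟩) h
    rw [EuclideanSpace.single_apply] at h0
    simp at h0
  haveI : Nonempty (Fin m) := Fin.pos_iff_nonempty.mp hm
  haveI : Nontrivial (Fin m → EuclideanSpace ℝ (Fin k)) := Function.nontrivial
  set μ := (volume : Measure (Fin m → EuclideanSpace ℝ (Fin k)))
  -- the shell has positive measure
  have hball : μ (Metric.ball 0 1) ≠ 0 ∧ μ (Metric.ball 0 1) ≠ ⊤ :=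
    ⟨(Metric.measure_ball_pos μ 0 one_pos).ne', measure_ball_lt_top.ne⟩
  have hshell : 0 < μ {x | 1 ≤ ‖x‖ ∧ ‖x‖ < 2} := by
    have hseq : {x : Fin m → EuclideanSpace ℝ (Fin k) | 1 ≤ ‖x‖ ∧ ‖x‖ < 2}
        = Metric.ball 0 2 \ Metric.ball 0 1 := by
      ext x
      simp only [Set.mem_diff, mem_ball_zero_iff, Set.mem_setOf_eq, not_lt]
      tauto
    have hlt : μ (Metric.ball 0 1) < μ (Metric.ball 0 2) := by
      rw [Measure.addHaar_ball μ 0 (by norm_num : (0:ℝ) ≤ 2)]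
      nth_rewrite 1 [show μ (Metric.ball 0 1) = 1 * μ (Metric.ball 0 1) by rw [one_mul]]
      rw [ENNReal.mul_lt_mul_iff_left hball.1 hball.2]
      rw [ENNReal.one_lt_ofReal, finrank_X]
      exact one_lt_pow₀ (by norm_num) (by positivity)
    rw [hseq, measure_diff (Metric.ball_subset_ball (by norm_num)) ?_ hball.2]
    · rwa [tsub_pos_iff_lt]
    · exact measurableSet_ball.nullMeasurableSet
  -- remove the null sets
  set W : Set (Fin m → EuclideanSpace ℝ (Fin k)) :=
    {x | (1 ≤ ‖x‖ ∧ ‖x‖ < 2) ∧ ∀ j, dotv (v j) x ≠ 0} with hW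
  have hWeq : W = {x : Fin m → EuclideanSpace ℝ (Fin k) | 1 ≤ ‖x‖ ∧ ‖x‖ < 2}
      \ ⋃ j, {x | dotv (v j) x = 0} := by
    ext x
    simp only [hW, Set.mem_setOf_eq, Set.mem_diff, Set.mem_iUnion, not_exists]
  have hWpos : 0 < μ W := by
    rw [hWeq, measure_diff_null (measure_iUnion_null hnull)]
    exact hshell
  have hWunion : W ⊆ ⋃ n : ℕ, Gset (k := k) v (1/((n:ℝ)+1)) := by
    intro x hx
    have hpos : ∀ j, 0 < ‖dotv (v j) x‖ := fun j => norm_pos_iff.mpr (hx.2 j)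
    haveI : Nonempty (Fin N) := Fin.pos_iff_nonempty.mp hN
    obtain ⟨j₀, hj₀⟩ := Finite.exists_min fun j => ‖dotv (v j) x‖
    obtain ⟨n, hn⟩ := exists_nat_gt (1 / ‖dotv (v j₀) x‖)
    refine Set.mem_iUnion.mpr ⟨n, hx.1, fun j => ?_⟩
    have h1 : 1/((n:ℝ)+1) ≤ ‖dotv (v j₀) x‖ := by
      rw [div_le_iff₀ (by positivity)]
      have h2 := (div_lt_iff₀ (hpos j₀)).mp hn
      nlinarith [hpos j₀]
    exact le_trans h1 (hj₀ j)
  have hmono : Monotone fun n : ℕ => Gset (k := k) v (1/((n:ℝ)+1)) := by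
    intro a b hab x hx
    refine ⟨hx.1, fun j => le_trans ?_ (hx.2 j)⟩
    have : (0:ℝ) < (a:ℝ) + 1 := by positivity
    apply one_div_le_one_div_of_le this
    exact_mod_cast by omega
  have hsup : 0 < ⨆ n : ℕ, μ (Gset (k := k) v (1/((n:ℝ)+1))) := by
    rw [← Directed.measure_iUnion (hmono.directed_le)]
    exact lt_of_lt_of_le hWpos (measure_mono hWunion)
  by_contra hcon
  push_neg at hcon
  have : ∀ n : ℕ, μ (Gset (k := k) v (1/((n:ℝ)+1))) = 0 := by
    intro n
    have h := hcon (1/((n:ℝ)+1)) (by positivity)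
    exact le_antisymm h zero_le
  rw [iSup_congr this] at hsup
  simp at hsup
end good


/-- A necessary condition for the weighted Brascamp–Lieb estimate. -/
theorem necessary_condition (m k N : ℕ) (hm : 0 < m) (hk : 0 < k) (hN : 0 < N)
    (v : Fin N → Fin m → ℝ) (hv0 : ∀ j, v j ≠ 0) (hvinj : Function.Injective v)
    (hnc : ∀ i j, i ≠ j → ∀ c : ℝ, v i ≠ c • v j)
    (p lam : Fin N → ℝ)
    (hp : ∀ j, 0 ≤ 1 / p j ∧ 1 / p j ≤ 1)
    (C : ℝ≥0∞) (hC : C ≠ ⊤)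
    (hbound : ∀ f : Fin N → EuclideanSpace ℝ (Fin k) → ℝ≥0∞, (∀ j, Measurable (f j)) →
      BLform v f ≤ C * ∏ j, wnorm (p j) (lam j) (f j)) :
    1 ≤ ∑ j, 1 / p j := by
  by_contra hcon
  push_neg at hcon
  set s : ℝ := ∑ j, 1 / p j with hs
  have hs0 : 0 ≤ s := Finset.sum_nonneg fun j _ => (hp j).1
  set β : Fin N → ℝ := fun j => lam j + k * (1 / p j) with hβ
  set a : ℝ := (∑ j, β j) - m * k with ha
  -- good set
  obtain ⟨ε, hε, hGpos⟩ := exists_good hm hk hN v hv0 (fun j => null_ker hk (v j) (hv0 j))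
  set G := Gset (k := k) v ε with hG
  have hGmeas : MeasurableSet G := measurableSet_Gset (k := k) v ε
  -- constants
  set K : Fin N → ℝ := fun j => 2 * ∑ i, |v j i| with hK
  have hKpos : ∀ j, 0 < K j := by
    intro j
    rw [hK]
    have : 0 < ∑ i, |v j i| := by
      obtain ⟨i, hi⟩ : ∃ i, v j i ≠ 0 := by
        by_contra h; push_neg at h; exact hv0 j (funext h)
      exact Finset.sum_pos' (fun i _ => abs_nonneg _) ⟨i, Finset.mem_univ i, abs_pos.mpr hi⟩
    positivity
  have hKbound : ∀ j, ∀ x ∈ G, ‖dotv (v j) x‖ ≤ K j := by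
    intro j x hx
    refine (norm_dotv_le (v j) x).trans ?_
    rw [hK, mul_comm]
    exact mul_le_mul_of_nonneg_right hx.1.2.le
      (Finset.sum_nonneg fun i _ => abs_nonneg _)
  set B : ℝ := ε⁻¹ + ∑ j, K j with hB
  obtain ⟨L, hL⟩ := pow_unbounded_of_one_lt B (by norm_num : (1:ℝ) < 2)
  have hLε : ε⁻¹ < 2 ^ L :=
    lt_of_le_of_lt (le_add_of_nonneg_right (Finset.sum_nonneg fun j _ => (hKpos j).le)) hL
  have hLK : ∀ j, K j < 2 ^ L := fun j =>
    lt_of_le_of_lt (le_add_of_nonneg_left (inv_nonneg.mpr hε.le) |>.trans'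
      (Finset.single_le_sum (fun i _ => (hKpos i).le) (Finset.mem_univ j))) hL
  -- ENNReal constants
  set cE : Fin N → ℝ≥0∞ :=
    fun j => min ((ENNReal.ofReal ε) ^ (-β j)) ((ENNReal.ofReal (K j)) ^ (-β j)) with hcE
  have hofε : ENNReal.ofReal ε ≠ 0 := (ENNReal.ofReal_pos.mpr hε).ne'
  have hofK : ∀ j, ENNReal.ofReal (K j) ≠ 0 := fun j => (ENNReal.ofReal_pos.mpr (hKpos j)).ne'
  have hcE0 : ∀ j, cE j ≠ 0 := by
    intro j
    rw [hcE]
    exact (lt_min (ENNReal.rpow_pos (ENNReal.ofReal_pos.mpr hε) ENNReal.ofReal_ne_top)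
      (ENNReal.rpow_pos (ENNReal.ofReal_pos.mpr (hKpos j)) ENNReal.ofReal_ne_top)).ne'
  set κ : ℝ≥0∞ := ∏ j, cE j with hκ
  have hκ0 : κ ≠ 0 := Finset.prod_ne_zero_iff.mpr fun j _ => hcE0 j
  set c₀ : ℝ≥0∞ := κ * volume G with hc₀
  have hc₀0 : c₀ ≠ 0 := mul_ne_zero hκ0 hGpos.ne'
  set E : ℝ≥0∞ := Dk k * (2 * (L : ℝ≥0∞) + 3) with hE
  have hE0 : E ≠ 0 := mul_ne_zero (Dk_pos hk).ne' (by simp)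
  have hEt : E ≠ ⊤ := ENNReal.mul_ne_top Dk_ne_top (ENNReal.add_ne_top.mpr ⟨ENNReal.mul_ne_top (by norm_num) (ENNReal.natCast_ne_top L), by norm_num⟩)
  set F : ℝ≥0∞ := C * E ^ s with hF
  have hFt : F ≠ ⊤ := ENNReal.mul_ne_top hC (rpow_ne_top' hE0 hEt s)
  have key : ∀ T : ℕ, c₀ * ((T : ℝ≥0∞) + 1) ≤ F * ((T : ℝ≥0∞) + 1) ^ s := by
    intro T
    set M : ℕ := T + L with hM
    set f : Fin N → EuclideanSpace ℝ (Fin k) → ℝ≥0∞ := fun j => testf k (β j) M with hf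
    have hfmeas : ∀ j, Measurable (f j) := fun j => measurable_testf _ _
    have hupper : C * ∏ j, wnorm (p j) (lam j) (f j) ≤ F * ((T : ℝ≥0∞) + 1) ^ s := by
      have harith : Dk k * (2 * (M:ℝ≥0∞) + 1) ≤ E * ((T:ℝ≥0∞) + 1) := by
        rw [hE, mul_assoc]
        refine mul_le_mul_right ?_ (Dk k)
        have h1 : (2 * (M:ℝ≥0∞) + 1) = ((2*M+1 : ℕ) : ℝ≥0∞) := by push_cast; ring
        have h2 : (2 * (L:ℝ≥0∞) + 3) * ((T:ℝ≥0∞) + 1) = (((2*L+3)*(T+1) : ℕ) : ℝ≥0∞) := by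
          push_cast; ring
        rw [h1, h2]
        refine Nat.cast_le.mpr ?_
        rw [hM]
        nlinarith [Nat.zero_le (L*T)]
      have hENt : E * ((T : ℝ≥0∞) + 1) ≠ ⊤ :=
        ENNReal.mul_ne_top hEt (by simp)
      have hEN0 : E * ((T : ℝ≥0∞) + 1) ≠ 0 := mul_ne_zero hE0 (by simp)
      have hw : ∀ j, wnorm (p j) (lam j) (f j) ≤ (E * ((T : ℝ≥0∞) + 1)) ^ (1 / p j) := by
        intro j
        rcases eq_or_lt_of_le (hp j).1 with h0 | hqpos
        · have hpj : p j = 0 := by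
            have h1 : 1 / p j = 0 := h0.symm
            rwa [one_div, inv_eq_zero] at h1
          rw [hpj, wnorm_zero]
          norm_num
        · have hpj : 0 < p j := one_div_pos.mp hqpos
          calc wnorm (p j) (lam j) (f j)
              ≤ (Dk k * (2 * (M:ℝ≥0∞) + 1)) ^ (1 / p j) := by
                rw [hf]
                exact wnorm_testf_le hpj M
            _ ≤ (E * ((T : ℝ≥0∞) + 1)) ^ (1 / p j) :=
                ENNReal.rpow_le_rpow harith (hp j).1
      calc C * ∏ j, wnorm (p j) (lam j) (f j)
          ≤ C * ∏ j, (E * ((T : ℝ≥0∞) + 1)) ^ (1 / p j) :=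
            mul_le_mul_right (Finset.prod_le_prod' fun j _ => hw j) C
        _ = C * (E * ((T : ℝ≥0∞) + 1)) ^ s := by
            rw [prod_rpow_const _ _ hEN0 hENt, ← hs]
        _ = F * ((T : ℝ≥0∞) + 1) ^ s := by
            rw [hF, ENNReal.mul_rpow_of_nonneg _ _ hs0, mul_assoc]
    have hlower : c₀ * ((T : ℝ≥0∞) + 1) ≤ BLform v f := by
      set t : ℕ → ℤ := fun i => if a ≤ 0 then (i:ℤ) else -(i:ℤ) with htdef
      have htabs : ∀ i : ℕ, i ≤ T → -(T:ℤ) ≤ t i ∧ t i ≤ T := by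
        intro i hi
        rw [htdef]
        split_ifs <;> constructor <;> simp <;> omega
      have htmul : ∀ i : ℕ, 0 ≤ -(t i : ℝ) * a := by
        intro i
        rw [htdef]
        have hi0 : (0:ℝ) ≤ (i:ℝ) := Nat.cast_nonneg i
        split_ifs with h
        · push_cast; nlinarith
        · push_neg at h; push_cast; nlinarith
      set r : ℕ → ℝ := fun i => (2:ℝ) ^ (t i) with hrdef
      have hr0 : ∀ i, 0 < r i := fun i => zpow_pos (by norm_num) _
      set P : ℕ → Set (Fin m → EuclideanSpace ℝ (Fin k)) := fun i => r i • G with hPdef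
      have hPmeas : ∀ i, MeasurableSet (P i) := by
        intro i
        have hpre : P i = (fun x : Fin m → EuclideanSpace ℝ (Fin k) => (r i)⁻¹ • x) ⁻¹' G := by
          ext x
          show x ∈ r i • G ↔ _
          rw [Set.mem_smul_set_iff_inv_smul_mem₀ (hr0 i).ne']
          exact Iff.rfl
        rw [hpre]
        exact hGmeas.preimage (continuous_const_smul _).measurable
      have hPnorm : ∀ i, ∀ x ∈ P i, r i ≤ ‖x‖ ∧ ‖x‖ < 2 * r i := by
        intro i x hx
        obtain ⟨y, hy, rfl⟩ := hx
        rw [norm_smul, Real.norm_eq_abs, abs_of_pos (hr0 i)]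
        constructor
        · nth_rewrite 1 [← mul_one (r i)]
          exact mul_le_mul_of_nonneg_left hy.1.1 (hr0 i).le
        · calc r i * ‖y‖ < r i * 2 := mul_lt_mul_of_pos_left hy.1.2 (hr0 i)
            _ = 2 * r i := by ring
      have hdisj : (↑(Finset.range (T+1)) : Set ℕ).PairwiseDisjoint P := by
        have haux : ∀ i₁ i₂ : ℕ, t i₁ < t i₂ → ∀ x, x ∈ P i₁ → x ∈ P i₂ → False := by
          intro i₁ i₂ hlt x h1 h2
          have hn1 := (hPnorm i₁ x h1).2
          have hn2 := (hPnorm i₂ x h2).1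
          have hcmp : 2 * r i₁ ≤ r i₂ := by
            rw [hrdef]
            have h21 : (2:ℝ) * 2 ^ (t i₁) = 2 ^ (t i₁ + 1) := by
              rw [zpow_add_one₀ (by norm_num : (2:ℝ) ≠ 0)]; ring
            simp only
            rw [h21]
            exact zpow_le_zpow_right₀ (by norm_num) (by omega)
          linarith
        intro i hi i' hi' hne
        have htne : t i ≠ t i' := by
          rw [htdef]
          simp only
          split_ifs <;> (intro hh; exact hne (by omega))
        refine Set.disjoint_left.mpr fun {x} hx hx' => ?_
        rcases lt_or_gt_of_ne htne with h | h
        · exact haux i i' h x hx hx'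
        · exact haux i' i h x hx' hx
      have hεL : (2:ℝ) ^ (-(L:ℤ)) < ε := by
        have h2L : (0:ℝ) < 2 ^ L := pow_pos (by norm_num) L
        have h1 : (1:ℝ) < ε * 2 ^ L := by
          calc (1:ℝ) = ε * ε⁻¹ := by field_simp
            _ < ε * 2 ^ L := by exact mul_lt_mul_of_pos_left hLε hε
        rw [zpow_neg, zpow_natCast]
        rw [inv_lt_iff_one_lt_mul₀ h2L]
        nlinarith
      have hpoint : ∀ i ∈ Finset.range (T+1), ∀ x ∈ P i,
          κ * (2:ℝ≥0∞) ^ ((t i : ℝ) * (-(∑ j, β j))) ≤ ∏ j, f j (dotv (v j) x) := by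
        intro i hi x hx
        obtain ⟨y, hy, rfl⟩ := hx
        have hiT : i ≤ T := by
          have := Finset.mem_range.mp hi; omega
        obtain ⟨ht1, ht2⟩ := htabs i hiT
        have hrlow : (2:ℝ) ^ (-(T:ℤ)) ≤ r i := by
          rw [hrdef]; exact zpow_le_zpow_right₀ (by norm_num) ht1
        have hrhigh : r i ≤ (2:ℝ) ^ (T:ℤ) := by
          rw [hrdef]; exact zpow_le_zpow_right₀ (by norm_num) ht2
        have hprod : ∏ j, ((2:ℝ≥0∞) ^ ((t i : ℝ) * (-β j)) * cE j)
            = κ * (2:ℝ≥0∞) ^ ((t i : ℝ) * (-(∑ j, β j))) := by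
          rw [Finset.prod_mul_distrib, ← hκ,
            prod_rpow_const _ _ (by norm_num) (by norm_num), mul_comm]
          congr 2
          rw [← Finset.mul_sum]
          congr 1
          rw [← Finset.sum_neg_distrib]
        rw [← hprod]
        refine Finset.prod_le_prod' fun j _ => ?_
        have hdl : ε ≤ ‖dotv (v j) y‖ := hy.2 j
        have hdh : ‖dotv (v j) y‖ ≤ K j := hKbound j y hy
        have hnr : ‖dotv (v j) (r i • y)‖ = r i * ‖dotv (v j) y‖ := by
          rw [dotv_smul, norm_smul, Real.norm_eq_abs, abs_of_pos (hr0 i)]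
        have hmem : dotv (v j) (r i • y) ∈ ann k M := by
          constructor
          · rw [hnr]
            calc (2:ℝ) ^ (-(M:ℝ)) = (2:ℝ) ^ (-(M:ℤ)) := by
                  rw [show (-(M:ℝ)) = ((-(M:ℤ) : ℤ) : ℝ) by push_cast; ring,
                    Real.rpow_intCast]
              _ = (2:ℝ) ^ (-(T:ℤ)) * 2 ^ (-(L:ℤ)) := by
                  rw [← zpow_add₀ (by norm_num : (2:ℝ) ≠ 0)]
                  congr 1
                  rw [hM]; push_cast; ring
              _ ≤ r i * ‖dotv (v j) y‖ := by
                  refine mul_le_mul hrlow (le_trans hεL.le hdl) ?_ (hr0 i).le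
                  positivity
          · rw [hnr]
            calc r i * ‖dotv (v j) y‖ ≤ (2:ℝ) ^ (T:ℤ) * 2 ^ (L:ℤ) := by
                  refine mul_le_mul hrhigh ?_ (by positivity) (by positivity)
                  refine hdh.trans ?_
                  rw [zpow_natCast]
                  exact (hLK j).le
              _ = (2:ℝ) ^ (M:ℝ) := by
                  rw [← zpow_add₀ (by norm_num : (2:ℝ) ≠ 0),
                    show ((M:ℝ)) = (((T:ℤ) + (L:ℤ) : ℤ) : ℝ) by rw [hM]; push_cast; ring,
                    Real.rpow_intCast]
        have hval : f j (dotv (v j) (r i • y))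
            = (‖dotv (v j) (r i • y)‖₊ : ℝ≥0∞) ^ (-β j) := by
          rw [hf]
          simp only [testf, if_pos hmem]
        rw [hval]
        have hsplit : (‖dotv (v j) (r i • y)‖₊ : ℝ≥0∞)
            = ENNReal.ofReal (r i) * ENNReal.ofReal ‖dotv (v j) y‖ := by
          rw [← enorm_eq_nnnorm, ← ofReal_norm, hnr, ENNReal.ofReal_mul (hr0 i).le]
        have hd0 : ENNReal.ofReal ‖dotv (v j) y‖ ≠ 0 :=
          (ENNReal.ofReal_pos.mpr (lt_of_lt_of_le hε hdl)).ne'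
        rw [hsplit, ENNReal.mul_rpow_of_ne_zero
          ((ENNReal.ofReal_pos.mpr (hr0 i)).ne') hd0]
        refine mul_le_mul' (le_of_eq ?_) ?_
        · rw [show r i = (2:ℝ) ^ ((t i : ℝ)) from (Real.rpow_intCast 2 (t i)).symm,
            ← ENNReal.ofReal_rpow_of_pos (by norm_num : (0:ℝ) < 2),
            show ENNReal.ofReal (2:ℝ) = (2:ℝ≥0∞) from ENNReal.ofReal_ofNat 2,
            ← ENNReal.rpow_mul]
        · exact rpow_min_le _ (ENNReal.ofReal_le_ofReal hdl) (ENNReal.ofReal_le_ofReal hdh)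
      have hPmeasure : ∀ i, volume (P i) = (2:ℝ≥0∞) ^ ((t i : ℝ) * (m*k : ℕ)) * volume G := by
        intro i
        show volume (r i • G) = _
        rw [Measure.addHaar_smul volume]
        congr 1
        rw [finrank_X, abs_of_pos (pow_pos (hr0 i) _),
          show r i = (2:ℝ) ^ ((t i : ℝ)) from (Real.rpow_intCast 2 (t i)).symm,
          ← Real.rpow_natCast ((2:ℝ) ^ ((t i : ℝ))) (m*k),
          ← Real.rpow_mul (by positivity),
          ← ENNReal.ofReal_rpow_of_pos (by norm_num : (0:ℝ) < 2),
          show ENNReal.ofReal (2:ℝ) = (2:ℝ≥0∞) from ENNReal.ofReal_ofNat 2]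
      have hpiece : ∀ i ∈ Finset.range (T+1), c₀ ≤ ∫⁻ x in P i, ∏ j, f j (dotv (v j) x) := by
        intro i hi
        have h2 : (1:ℝ≥0∞) ≤ (2:ℝ≥0∞) ^ ((t i:ℝ) * (-(∑ j, β j)))
            * (2:ℝ≥0∞) ^ ((t i:ℝ) * (m*k : ℕ)) := by
          rw [← ENNReal.rpow_add _ _ (by norm_num) (by norm_num)]
          have hexp : (0:ℝ) ≤ (t i:ℝ) * (-(∑ j, β j)) + (t i:ℝ) * (m*k : ℕ) := by
            have h3 := htmul i
            have h4 : -(t i : ℝ) * a = (t i:ℝ) * (-(∑ j, β j)) + (t i:ℝ) * (m*k : ℕ) := by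
              rw [ha]; push_cast; ring
            linarith [h4 ▸ h3]
          calc (1:ℝ≥0∞) = 2 ^ (0:ℝ) := by rw [ENNReal.rpow_zero]
            _ ≤ _ := ENNReal.rpow_le_rpow_of_exponent_le (by norm_num) hexp
        calc c₀ = (κ * volume G) * 1 := by rw [hc₀, mul_one]
          _ ≤ (κ * volume G) * ((2:ℝ≥0∞) ^ ((t i:ℝ) * (-(∑ j, β j)))
              * (2:ℝ≥0∞) ^ ((t i:ℝ) * (m*k : ℕ))) := mul_le_mul_right h2 _
          _ = (κ * (2:ℝ≥0∞) ^ ((t i:ℝ) * (-(∑ j, β j))))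
              * ((2:ℝ≥0∞) ^ ((t i:ℝ) * (m*k : ℕ)) * volume G) := by ring
          _ = (κ * (2:ℝ≥0∞) ^ ((t i:ℝ) * (-(∑ j, β j)))) * volume (P i) := by
              rw [hPmeasure i]
          _ = ∫⁻ _x in P i, (κ * (2:ℝ≥0∞) ^ ((t i:ℝ) * (-(∑ j, β j)))) := by
              rw [setLIntegral_const]
          _ ≤ ∫⁻ x in P i, ∏ j, f j (dotv (v j) x) :=
              setLIntegral_mono' (hPmeas i) (fun x hx => hpoint i hi x hx)
      calc c₀ * ((T:ℝ≥0∞)+1) = ∑ _i ∈ Finset.range (T+1), c₀ := by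
            rw [Finset.sum_const, Finset.card_range, nsmul_eq_mul]
            push_cast; ring
        _ ≤ ∑ i ∈ Finset.range (T+1), ∫⁻ x in P i, ∏ j, f j (dotv (v j) x) :=
            Finset.sum_le_sum hpiece
        _ = ∫⁻ x in ⋃ i ∈ Finset.range (T+1), P i, ∏ j, f j (dotv (v j) x) :=
            (lintegral_biUnion_finset hdisj (fun i _ => hPmeas i) _).symm
        _ ≤ BLform v f := setLIntegral_le_lintegral _ _
    exact le_trans hlower ((hbound f hfmeas).trans hupper)
  exact endgame hc₀0 hFt hs0 hcon key
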